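/- Let M be a countable monoid. There exists a monoid homomorphism φ from M into the multiplicative monoid of continuous linear operators on ℓ₁, with ‖φ(m)‖ ≤ 1 for every m ∈ M, such that for every separable real Banach space E and every monoid homomorphism ψ from M into the multiplicative monoid of continuous linear operators on E with ‖ψ(m)‖ ≤ 1 for every m ∈ M, there exists a surjective continuous linear operator q : ℓ₁ → E with operator norm at most 1 satisfying ψ(m) ∘ q = q ∘ φ(m) for every m ∈ M. -/

import Mathlib

open TopologicalSpace

/-- `ℓ₁` : the real Banach space of summable sequences. -/
noncomputable abbrev ellOne : Type := lp (fun _ : ℕ => ℝ) 1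

namespace UnivAux

lemma ellOne_summable (f : ellOne) : Summable fun i => ‖f i‖ := by
  have := (lp.memℓp f).summable (p := (1 : ENNReal)) (by norm_num)
  simpa using this

lemma ellOne_norm (f : ellOne) : ‖f‖ = ∑' i, ‖f i‖ := by
  have := lp.norm_rpow_eq_tsum (p := (1 : ENNReal)) (by norm_num) f
  simpa using this

variable {E : Type*} [NormedAddCommGroup E] [NormedSpace ℝ E] [CompleteSpace E]

lemma summable_aux (v : ℕ → E) (hv : ∀ i, ‖v i‖ ≤ 1) (f : ellOne) :
    Summable fun i => f i • v i := by
  refine Summable.of_norm_bounded (ellOne_summable f) fun i => ?_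
  rw [norm_smul]
  calc ‖f i‖ * ‖v i‖ ≤ ‖f i‖ * 1 := by
        gcongr; exact hv i
    _ = ‖f i‖ := mul_one _

/-- The nonexpansive operator `ℓ₁ → E` sending the `i`-th basis vector to `v i`. -/
noncomputable def Tv (v : ℕ → E) (hv : ∀ i, ‖v i‖ ≤ 1) : ellOne →L[ℝ] E :=
  LinearMap.mkContinuous
    { toFun := fun f => ∑' i, f i • v i
      map_add' := by
        intro f g
        have h1 := summable_aux v hv f
        have h2 := summable_aux v hv g
        have key : ∀ i : ℕ, (↑(f + g) : ∀ _ : ℕ, ℝ) i • v i = f i • v i + g i • v i := by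
          intro i
          have : (↑(f + g) : ∀ _ : ℕ, ℝ) i = f i + g i := by
            rw [lp.coeFn_add]; rfl
          rw [this, add_smul]
        calc ∑' i, (↑(f + g) : ∀ _ : ℕ, ℝ) i • v i
            = ∑' i, (f i • v i + g i • v i) := tsum_congr key
          _ = (∑' i, f i • v i) + ∑' i, g i • v i := h1.tsum_add h2
      map_smul' := by
        intro c f
        have h1 := summable_aux v hv f
        have : ∀ i, (↑(c • f) : ∀ _ : ℕ, ℝ) i • v i = c • (f i • v i) := by
          intro i
          have : (↑(c • f) : ∀ _ : ℕ, ℝ) i = c * f i := by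
            rw [lp.coeFn_smul]; rfl
          rw [this, smul_smul]
        simp only [RingHom.id_apply]
        rw [funext this, (h1.hasSum.const_smul c).tsum_eq] }
    1
    (by
      intro f
      have hle : ∀ i, ‖f i • v i‖ ≤ ‖f i‖ := fun i => by
        rw [norm_smul]
        calc ‖f i‖ * ‖v i‖ ≤ ‖f i‖ * 1 := by gcongr; exact hv i
          _ = ‖f i‖ := mul_one _
      have hn : Summable fun i => ‖f i • v i‖ :=
        Summable.of_nonneg_of_le (fun i => norm_nonneg _) hle (ellOne_summable f)
      calc ‖∑' i, f i • v i‖ ≤ ∑' i, ‖f i • v i‖ := norm_tsum_le_tsum_norm hn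
        _ ≤ ∑' i, ‖f i‖ := by
            refine hn.tsum_le_tsum (fun i => ?_) (ellOne_summable f)
            rw [norm_smul]
            calc ‖f i‖ * ‖v i‖ ≤ ‖f i‖ * 1 := by gcongr; exact hv i
              _ = ‖f i‖ := mul_one _
        _ = 1 * ‖f‖ := by rw [ellOne_norm f, one_mul])

lemma Tv_norm_le (v : ℕ → E) (hv : ∀ i, ‖v i‖ ≤ 1) : ‖Tv v hv‖ ≤ 1 :=
  LinearMap.mkContinuous_norm_le _ zero_le_one _

lemma Tv_single (v : ℕ → E) (hv : ∀ i, ‖v i‖ ≤ 1) (i : ℕ) (c : ℝ) :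
    Tv v hv (lp.single 1 i c) = c • v i := by
  have h0 : Tv v hv (lp.single 1 i c) = ∑' j, (lp.single 1 i c : ellOne) j • v j := rfl
  have h1 : ∑' j, (lp.single 1 i c : ellOne) j • v j
      = (lp.single 1 i c : ellOne) i • v i := by
    refine tsum_eq_single i fun j hj => ?_
    rw [lp.single_apply_ne (E := fun _ : ℕ => ℝ) 1 i c hj, zero_smul]
  rw [h0, h1, lp.single_apply_self (E := fun _ : ℕ => ℝ)]

/-- Two continuous linear maps on `ℓ₁` agreeing on basis vectors are equal. -/
lemma ext_basis {F : Type*} [NormedAddCommGroup F] [NormedSpace ℝ F]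
    (A B : ellOne →L[ℝ] F) (h : ∀ i, A (lp.single 1 i (1 : ℝ)) = B (lp.single 1 i (1 : ℝ))) :
    A = B := by
  ext f
  have hf := lp.hasSum_single (p := (1 : ENNReal)) (by norm_num) f
  have hA : HasSum (fun i => A (lp.single 1 i (f i))) (A f) := hf.mapL A
  have hB : HasSum (fun i => B (lp.single 1 i (f i))) (B f) := hf.mapL B
  have key : ∀ i, A (lp.single 1 i (f i)) = B (lp.single 1 i (f i)) := by
    intro i
    have h1 : lp.single (E := fun _ : ℕ => ℝ) 1 i (f i) = f i • lp.single 1 i (1 : ℝ) := by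
      rw [← lp.single_smul]
      congr 1
      simp
    rw [h1, map_smul, map_smul, h i]
  rw [funext key] at hA
  exact hA.unique hB

/-- Surjectivity from approximate surjectivity on the unit ball. -/
lemma surj_aux {X Y : Type*} [NormedAddCommGroup X] [NormedSpace ℝ X] [CompleteSpace X]
    [NormedAddCommGroup Y] [NormedSpace ℝ Y] (q : X →L[ℝ] Y)
    (h : ∀ y : Y, ‖y‖ ≤ 1 → ∀ ε > 0, ∃ x : X, ‖x‖ ≤ 1 ∧ ‖y - q x‖ < ε) :
    Function.Surjective q := by
  have h' : ∀ y : Y, ∃ x : X, ‖x‖ ≤ ‖y‖ ∧ ‖y - q x‖ ≤ ‖y‖ / 2 := by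
    intro y
    rcases eq_or_ne y 0 with rfl | hy
    · exact ⟨0, by simp⟩
    · have hny : 0 < ‖y‖ := norm_pos_iff.2 hy
      obtain ⟨x, hx1, hx2⟩ := h (‖y‖⁻¹ • y) (by
        rw [norm_smul, norm_inv, norm_norm, inv_mul_cancel₀ hny.ne']) (1 / 2) (by norm_num)
      refine ⟨‖y‖ • x, ?_, ?_⟩
      · rw [norm_smul, norm_norm]
        calc ‖y‖ * ‖x‖ ≤ ‖y‖ * 1 := by gcongr
          _ = ‖y‖ := mul_one _
      · have hrw : y - q (‖y‖ • x) = ‖y‖ • (‖y‖⁻¹ • y - q x) := by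
          rw [smul_sub, smul_inv_smul₀ hny.ne', map_smul]
        rw [hrw, norm_smul, norm_norm]
        calc ‖y‖ * ‖‖y‖⁻¹ • y - q x‖ ≤ ‖y‖ * (1 / 2) :=
              mul_le_mul_of_nonneg_left hx2.le (norm_nonneg y)
          _ = ‖y‖ / 2 := by ring
  choose F hF1 hF2 using h'
  intro y
  set Y0 : ℕ → Y := fun n => (fun z => z - q (F z))^[n] y with hY0
  have hYsucc : ∀ n, Y0 (n + 1) = Y0 n - q (F (Y0 n)) := fun n =>
    Function.iterate_succ_apply' _ _ _
  have hYnorm : ∀ n, ‖Y0 n‖ ≤ (1 / 2 : ℝ) ^ n * ‖y‖ := by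
    intro n
    induction n with
    | zero => simp [Y0]
    | succ n ih =>
      rw [hYsucc]
      calc ‖Y0 n - q (F (Y0 n))‖ ≤ ‖Y0 n‖ / 2 := hF2 _
        _ ≤ (1 / 2 : ℝ) ^ n * ‖y‖ / 2 := by linarith
        _ = (1 / 2 : ℝ) ^ (n + 1) * ‖y‖ := by ring
  have hsum : Summable fun n => F (Y0 n) := by
    refine Summable.of_norm_bounded (summable_geometric_two.mul_right ‖y‖) fun n => ?_
    exact (hF1 _).trans (hYnorm n)
  refine ⟨∑' n, F (Y0 n), ?_⟩
  have h1 : HasSum (fun n => q (F (Y0 n))) (q (∑' n, F (Y0 n))) := hsum.hasSum.mapL q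
  have h2 : ∀ n, ∑ k ∈ Finset.range n, q (F (Y0 k)) = y - Y0 n := by
    intro n
    induction n with
    | zero => simp [Y0]
    | succ n ih =>
      rw [Finset.sum_range_succ, ih, hYsucc]
      abel
  have h3 : Filter.Tendsto (fun n => y - Y0 n) Filter.atTop (nhds y) := by
    have hz : Filter.Tendsto Y0 Filter.atTop (nhds 0) := by
      rw [tendsto_zero_iff_norm_tendsto_zero]
      refine squeeze_zero (fun n => norm_nonneg _) hYnorm ?_
      have := (tendsto_pow_atTop_nhds_zero_of_lt_one (by norm_num : (0:ℝ) ≤ 1/2)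
        (by norm_num : (1/2:ℝ) < 1)).mul_const ‖y‖
      simpa using this
    simpa using Filter.Tendsto.sub (tendsto_const_nhds (x := y)) hz
  have h4 := h1.tendsto_sum_nat
  rw [funext h2] at h4
  exact tendsto_nhds_unique h4 h3

end UnivAux

open UnivAux

/-- For every countable monoid `M` there is a universal nonexpansive `M`-action on `ℓ₁`:
every nonexpansive `M`-action on a separable real Banach space lifts to it via a surjective
nonexpansive operator. -/
theorem exists_universal_monoid_action (M : Type) [Monoid M] [Countable M] :
    ∃ φ : M →* (ellOne →L[ℝ] ellOne), (∀ m : M, ‖φ m‖ ≤ 1) ∧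
      ∀ (E : Type) [NormedAddCommGroup E] [NormedSpace ℝ E] [CompleteSpace E]
        [SeparableSpace E] (ψ : M →* (E →L[ℝ] E)), (∀ m : M, ‖ψ m‖ ≤ 1) →
        ∃ q : ellOne →L[ℝ] E, Function.Surjective q ∧ ‖q‖ ≤ 1 ∧
          ∀ (m : M) (x : ellOne), ψ m (q x) = q (φ m x) := by
  classical
  haveI : Encodable (M × ℕ) := Encodable.ofCountable _
  haveI : Infinite (M × ℕ) := Prod.infinite_of_right
  haveI : Denumerable (M × ℕ) := Denumerable.ofEncodableOfInfinite _
  let π : M × ℕ ≃ ℕ := Denumerable.eqv (M × ℕ)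
  set e : ℕ → ellOne := fun i => lp.single 1 i (1 : ℝ) with he_def
  have he : ∀ i, ‖e i‖ = 1 := by
    intro i
    have := lp.norm_single (p := (1 : ENNReal)) (by norm_num) (E := fun _ : ℕ => ℝ) i (1 : ℝ)
    exact this.trans (by simp)
  have he1 : ∀ i, ‖e i‖ ≤ 1 := fun i => (he i).le
  set vφ : M → ℕ → ellOne := fun m i => e (π (m * (π.symm i).1, (π.symm i).2)) with hvφ
  have hvφ1 : ∀ m i, ‖vφ m i‖ ≤ 1 := fun m i => he1 _
  set φ₀ : M → (ellOne →L[ℝ] ellOne) := fun m => Tv (vφ m) (hvφ1 m) with hφ₀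
  have hφ₀e : ∀ m i, φ₀ m (e i) = e (π (m * (π.symm i).1, (π.symm i).2)) := by
    intro m i
    have := Tv_single (vφ m) (hvφ1 m) i 1
    rw [one_smul] at this
    exact this
  have hφone : φ₀ 1 = 1 := by
    refine ext_basis _ _ fun i => ?_
    rw [show (lp.single 1 i (1:ℝ) : ellOne) = e i from rfl, hφ₀e]
    simp [ContinuousLinearMap.one_apply]
  have hφmul : ∀ a b : M, φ₀ (a * b) = φ₀ a * φ₀ b := by
    intro a b
    refine ext_basis _ _ fun i => ?_
    rw [show (lp.single 1 i (1:ℝ) : ellOne) = e i from rfl]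
    rw [ContinuousLinearMap.mul_apply, hφ₀e, hφ₀e, hφ₀e]
    rw [Equiv.symm_apply_apply]
    rw [mul_assoc]
  let φ : M →* (ellOne →L[ℝ] ellOne) := ⟨⟨φ₀, hφone⟩, hφmul⟩
  refine ⟨φ, fun m => Tv_norm_le (vφ m) (hvφ1 m), ?_⟩
  intro E _ _ _ _ ψ hψ
  -- dense sequence in the closed unit ball of E
  haveI : SecondCountableTopology E := UniformSpace.secondCountable_of_separable E
  haveI : Nonempty (Metric.closedBall (0 : E) 1) := ⟨⟨0, by simp⟩⟩
  obtain ⟨u, hu⟩ := exists_dense_seq (Metric.closedBall (0 : E) 1)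
  set x : ℕ → E := fun k => (u k : E) with hx
  have hx1 : ∀ k, ‖x k‖ ≤ 1 := by
    intro k
    have := (u k).2
    rwa [Metric.mem_closedBall, dist_zero_right] at this
  set w : ℕ → E := fun i => ψ (π.symm i).1 (x (π.symm i).2) with hw
  have hw1 : ∀ i, ‖w i‖ ≤ 1 := by
    intro i
    calc ‖ψ (π.symm i).1 (x (π.symm i).2)‖ ≤ ‖ψ (π.symm i).1‖ * ‖x (π.symm i).2‖ :=
          ContinuousLinearMap.le_opNorm _ _
      _ ≤ 1 := mul_le_one₀ (hψ _) (norm_nonneg _) (hx1 _)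
  set q : ellOne →L[ℝ] E := Tv w hw1 with hq
  have hqe : ∀ i, q (e i) = w i := by
    intro i
    have := Tv_single w hw1 i 1
    rw [one_smul] at this
    exact this
  have hcomm : ∀ m : M, (ψ m).comp q = q.comp (φ m) := by
    intro m
    refine ext_basis _ _ fun i => ?_
    rw [ContinuousLinearMap.comp_apply, ContinuousLinearMap.comp_apply]
    rw [show (lp.single 1 i (1:ℝ) : ellOne) = e i from rfl]
    have hφm : φ m (e i) = e (π (m * (π.symm i).1, (π.symm i).2)) := hφ₀e m i
    rw [hqe, hφm, hqe]
    rw [hw]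
    simp only [Equiv.symm_apply_apply]
    rw [← ContinuousLinearMap.mul_apply, ← map_mul]
  refine ⟨q, ?_, Tv_norm_le _ _, ?_⟩
  · -- surjectivity
    refine surj_aux q fun y hy ε hε => ?_
    have hyB : (⟨y, by rwa [Metric.mem_closedBall, dist_zero_right]⟩ :
        Metric.closedBall (0 : E) 1) ∈ closure (Set.range u) := hu.closure_range ▸ trivial
    obtain ⟨k, hk⟩ := Metric.mem_closure_range_iff.1 hyB ε hε
    refine ⟨e (π (1, k)), (he _).le, ?_⟩
    have : q (e (π (1, k))) = x k := by
      rw [hqe, hw]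
      simp only [Equiv.symm_apply_apply]
      rw [map_one, ContinuousLinearMap.one_apply]
    rw [this]
    have : dist y (x k) < ε := by
      have := hk
      rwa [Subtype.dist_eq] at this
    rwa [dist_eq_norm] at this
  · intro m f
    have := congrArg (fun T => T f) (hcomm m)
    simpa using this
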